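/- Let σ(t) = 1/(1 + exp(−t)) be the logistic sigmoid, let M ≤ N, and let x₁ < ⋯ < x_M be distinct real numbers. Then the set of parameter vectors (a₁,…,a_N, b₁,…,b_N) ∈ ℝ^N × ℝ^N for which the M × N collocation matrix S with entries S_{ji} = σ(a_i x_j + b_i) has rank strictly less than M has Lebesgue measure zero in ℝ^{2N}; consequently, for almost every random choice of internal parameters the overparametrized interpolation system S·w = y admits a solution w ∈ ℝ^N for every y ∈ ℝ^M. -/

import Mathlib

open MeasureTheory Matrix

section AuxLemmas
open Set Filter


lemma null_of_analytic_1d {f : ℝ → ℝ} (hf : AnalyticOnNhd ℝ f Set.univ)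
    (h : ∃ z, f z ≠ 0) : volume {x | f x = 0} = 0 := by
  rcases hf.eqOn_zero_or_eventually_ne_zero_of_preconnected isPreconnected_univ with h0 | h1
  · obtain ⟨z, hz⟩ := h; exact absurd (h0 (mem_univ z)) hz
  · have hacc : ∀ y : ℝ, ¬ AccPt y (Filter.principal {x | f x = 0}) := by
      have h2 : {x | f x ≠ 0} ∈ Filter.codiscrete ℝ := h1
      rw [mem_codiscrete_accPt] at h2
      intro y hy
      have heq : {x | f x ≠ 0}ᶜ = {x | f x = 0} := by ext t; simp
      exact h2 y (heq ▸ hy)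
    have hc : Set.Countable {x | f x = 0} := by
      have hcover : {x | f x = 0} ⊆ ⋃ n : ℕ, ({x | f x = 0} ∩ Set.Icc (-(n:ℝ)) n) := by
        intro t ht
        refine Set.mem_iUnion.2 ⟨⌈|t|⌉₊, ht, ?_⟩
        have h1 : |t| ≤ (⌈|t|⌉₊ : ℝ) := Nat.le_ceil _
        constructor
        · linarith [neg_abs_le t]
        · linarith [le_abs_self t]
      refine Set.Countable.mono hcover (Set.countable_iUnion fun n => Set.Finite.countable ?_)
      by_contra hinf
      have hinf' : Set.Infinite ({x | f x = 0} ∩ Set.Icc (-(n:ℝ)) n) := hinf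
      obtain ⟨y, -, hy⟩ := hinf'.exists_accPt_of_subset_isCompact
        (isCompact_Icc (a := -(n:ℝ)) (b := n)) Set.inter_subset_right
      exact hacc y (hy.mono (le_principal_iff.mpr (Filter.mem_principal.2 Set.inter_subset_left)))
    exact hc.measure_zero _

lemma null_of_analytic_pi : ∀ (n : ℕ) (f : (Fin n → ℝ) → ℝ),
    AnalyticOnNhd ℝ f Set.univ → (∃ z, f z ≠ 0) → volume {x | f x = 0} = 0 := by
  intro n
  induction n with
  | zero =>
    intro f hf ⟨z, hz⟩
    have : {x : Fin 0 → ℝ | f x = 0} = ∅ := by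
      ext t; simp only [mem_setOf_eq, mem_empty_iff_false, iff_false]
      rwa [Subsingleton.elim t z]
    rw [this]; exact measure_empty
  | succ n ih =>
    intro f hf ⟨z, hz⟩
    -- the continuous linear-ish map (a, v) ↦ Fin.cons a v is analytic
    have hcons : AnalyticOnNhd ℝ
        (fun p : ℝ × (Fin n → ℝ) => (Fin.cons p.1 p.2 : Fin (n+1) → ℝ)) univ := by
      refine AnalyticOnNhd.pi (fun i => ?_)
      refine Fin.cases ?_ (fun j => ?_) i
      · simp only [Fin.cons_zero]
        exact (ContinuousLinearMap.fst ℝ ℝ (Fin n → ℝ)).analyticOnNhd univ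
      · simp only [Fin.cons_succ]
        exact ((ContinuousLinearMap.proj j).comp
          (ContinuousLinearMap.snd ℝ ℝ (Fin n → ℝ))).analyticOnNhd univ
    set g : ℝ × (Fin n → ℝ) → ℝ := fun p => f (Fin.cons p.1 p.2) with hg_def
    have hg : AnalyticOnNhd ℝ g univ := hf.comp hcons (mapsTo_univ _ _)
    have hgz : g (z 0, fun j => z j.succ) ≠ 0 := by
      show f (Fin.cons (z 0) fun j => z j.succ) ≠ 0
      rwa [show (Fin.cons (z 0) fun j => z j.succ : Fin (n+1) → ℝ) = z from
        funext fun i => Fin.cases rfl (fun j => rfl) i]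
    -- measurable equivalence
    set e := MeasurableEquiv.piFinSuccAbove (fun _ : Fin (n+1) => ℝ) 0 with he_def
    have hmp := (measurePreserving_piFinSuccAbove (fun _ : Fin (n+1) => (volume : Measure ℝ)) 0).symm
    have hesymm : ∀ p : ℝ × (Fin n → ℝ), e.symm p = Fin.cons p.1 p.2 := by
      intro p
      show (Fin.insertNthEquiv (fun _ : Fin (n+1) => ℝ) 0) p = _
      simp [Fin.insertNthEquiv, Fin.insertNth_zero', Fin.consEquiv]
    have hS : volume {x : Fin (n+1) → ℝ | f x = 0}
        = ((volume : Measure ℝ).prod (volume : Measure (Fin n → ℝ))) {p | g p = 0} := by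
      rw [MeasureTheory.volume_pi]
      rw [show (Measure.pi fun _ : Fin (n+1) => (volume : Measure ℝ)) {x | f x = 0}
          = _ from (MeasurePreserving.measure_preimage_equiv hmp _).symm]
      rw [MeasureTheory.volume_pi]
      congr 1
      ext p
      simp [hesymm p, hg_def, Fin.consEquiv]
    rw [hS]
    have hcont : Continuous g := by
      rw [← continuousOn_univ]; exact hg.continuousOn
    have hmeas : MeasurableSet {p : ℝ × (Fin n → ℝ) | g p = 0} :=
      (isClosed_eq hcont continuous_const).measurableSet
    rw [MeasureTheory.Measure.measure_prod_null hmeas]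
    -- bad set of a's
    have hbad : volume {a : ℝ | g (a, fun j => z j.succ) = 0} = 0 := by
      apply null_of_analytic_1d
      · have := hg.curry_left (y := fun j => z j.succ)
        simpa using this
      · exact ⟨z 0, hgz⟩
    have hae : ∀ᵐ a : ℝ ∂volume, a ∉ {a : ℝ | g (a, fun j => z j.succ) = 0} :=
      measure_eq_zero_iff_ae_notMem.mp hbad
    rw [Filter.EventuallyEq, Filter.eventually_iff] at *
    filter_upwards [hae] with a ha
    have hslice : AnalyticOnNhd ℝ (fun v : Fin n → ℝ => g (a, v)) univ := by
      have := hg.curry_right (x := a)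
      simpa using this
    have := ih (fun v => g (a, v)) hslice ⟨(fun j => z j.succ), ha⟩
    show volume (Prod.mk a ⁻¹' {p | g p = 0}) = 0
    convert this using 2
    rfl

lemma null_of_analytic_prod {n m : ℕ} (f : (Fin n → ℝ) × (Fin m → ℝ) → ℝ)
    (hf : AnalyticOnNhd ℝ f Set.univ) (h : ∃ z, f z ≠ 0) :
    volume {p | f p = 0} = 0 := by
  obtain ⟨z, hz⟩ := h
  have hcont : Continuous f := by
    rw [← continuousOn_univ]; exact hf.continuousOn
  have hmeas : MeasurableSet {p : (Fin n → ℝ) × (Fin m → ℝ) | f p = 0} :=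
    (isClosed_eq hcont continuous_const).measurableSet
  rw [MeasureTheory.Measure.volume_eq_prod, MeasureTheory.Measure.measure_prod_null hmeas]
  have hbad : volume {a : Fin n → ℝ | f (a, z.2) = 0} = 0 := by
    apply null_of_analytic_pi
    · have := hf.curry_left (y := z.2); simpa using this
    · exact ⟨z.1, by simpa using hz⟩
  have hae : ∀ᵐ a : (Fin n → ℝ) ∂volume, a ∉ {a | f (a, z.2) = 0} :=
    measure_eq_zero_iff_ae_notMem.mp hbad
  rw [Filter.EventuallyEq, Filter.eventually_iff] at *
  filter_upwards [hae] with a ha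
  have hslice : AnalyticOnNhd ℝ (fun v : Fin m → ℝ => f (a, v)) univ := by
    have := hf.curry_right (x := a); simpa using this
  have := null_of_analytic_pi m (fun v => f (a, v)) hslice ⟨z.2, ha⟩
  show volume (Prod.mk a ⁻¹' {p | f p = 0}) = 0
  convert this using 2
  rfl


lemma sigmoid_entry_analytic {N : ℕ} (k : Fin N) (c : ℝ) :
    AnalyticOnNhd ℝ (fun p : (Fin N → ℝ) × (Fin N → ℝ) =>
      1 / (1 + Real.exp (-(p.1 k * c + p.2 k)))) univ := by
  have h1 : AnalyticOnNhd ℝ (fun p : (Fin N → ℝ) × (Fin N → ℝ) => p.1 k * c + p.2 k) univ := by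
    have ha : AnalyticOnNhd ℝ (fun p : (Fin N → ℝ) × (Fin N → ℝ) => p.1 k) univ :=
      ((ContinuousLinearMap.proj k).comp
        (ContinuousLinearMap.fst ℝ (Fin N → ℝ) (Fin N → ℝ))).analyticOnNhd univ
    have hb : AnalyticOnNhd ℝ (fun p : (Fin N → ℝ) × (Fin N → ℝ) => p.2 k) univ :=
      ((ContinuousLinearMap.proj k).comp
        (ContinuousLinearMap.snd ℝ (Fin N → ℝ) (Fin N → ℝ))).analyticOnNhd univ
    exact (ha.mul analyticOnNhd_const).add hb
  have h2 : AnalyticOnNhd ℝ (fun p : (Fin N → ℝ) × (Fin N → ℝ) =>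
      1 + Real.exp (-(p.1 k * c + p.2 k))) univ :=
    analyticOnNhd_const.add (analyticOnNhd_rexp.comp h1.neg (mapsTo_univ _ _))
  exact analyticOnNhd_const.div h2 (fun p _ => by positivity)

lemma det_analytic {M N : ℕ} (hMN : M ≤ N) (x : Fin M → ℝ) :
    AnalyticOnNhd ℝ (fun p : (Fin N → ℝ) × (Fin N → ℝ) =>
      (Matrix.of fun (j i : Fin M) =>
        1 / (1 + Real.exp (-(p.1 (Fin.castLE hMN i) * x j + p.2 (Fin.castLE hMN i))))).det) univ := by
  have : (fun p : (Fin N → ℝ) × (Fin N → ℝ) =>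
      (Matrix.of fun (j i : Fin M) =>
        1 / (1 + Real.exp (-(p.1 (Fin.castLE hMN i) * x j + p.2 (Fin.castLE hMN i))))).det)
      = fun p => ∑ σ : Equiv.Perm (Fin M), ((Equiv.Perm.sign σ : ℤ) : ℝ) *
          ∏ j : Fin M,
            1 / (1 + Real.exp (-(p.1 (Fin.castLE hMN j) * x (σ j) + p.2 (Fin.castLE hMN j)))) := by
    funext p
    rw [Matrix.det_apply]
    congr 1; funext σ
    rw [Units.smul_def, zsmul_eq_mul]
    simp [Matrix.of_apply]
  rw [this]
  apply Finset.analyticOnNhd_fun_sum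
  intro σ _
  exact analyticOnNhd_const.mul <| Finset.analyticOnNhd_fun_prod _ fun j _ =>
    sigmoid_entry_analytic (Fin.castLE hMN j) (x (σ j))

lemma det_ne_zero_exists {M N : ℕ} (hMN : M ≤ N) (x : Fin M → ℝ) (hx : StrictMono x) :
    ∃ p : (Fin N → ℝ) × (Fin N → ℝ),
      (Matrix.of fun (j i : Fin M) =>
        1 / (1 + Real.exp (-(p.1 (Fin.castLE hMN i) * x j + p.2 (Fin.castLE hMN i))))).det ≠ 0 := by
  -- a uniform gap δ
  obtain ⟨δ, hδpos, hδ⟩ : ∃ δ > 0, ∀ i j : Fin M, j < i → x j < x i - δ := by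
    set s : Finset (Fin M × Fin M) := Finset.univ.filter (fun q => q.1 < q.2) with hs_def
    by_cases hs : s.Nonempty
    · refine ⟨s.inf' hs (fun q => x q.2 - x q.1) / 2, ?_, ?_⟩
      · have h0 : 0 < s.inf' hs (fun q => x q.2 - x q.1) :=
          (Finset.lt_inf'_iff hs).mpr fun q hq =>
            sub_pos.mpr (hx (Finset.mem_filter.mp hq).2)
        linarith
      · intro i j hji
        have hmem : ((j, i) : Fin M × Fin M) ∈ s :=
          Finset.mem_filter.mpr ⟨Finset.mem_univ _, hji⟩
        have h1 : s.inf' hs (fun q => x q.2 - x q.1) ≤ x i - x j :=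
          Finset.inf'_le (fun q : Fin M × Fin M => x q.2 - x q.1) hmem
        have h0 : 0 < s.inf' hs (fun q => x q.2 - x q.1) :=
          (Finset.lt_inf'_iff hs).mpr fun q hq =>
            sub_pos.mpr (hx (Finset.mem_filter.mp hq).2)
        linarith
    · exact ⟨1, one_pos, fun i j hji =>
        absurd ⟨(j, i), Finset.mem_filter.mpr ⟨Finset.mem_univ _, hji⟩⟩ hs⟩
  -- target triangular matrix
  set L : Matrix (Fin M) (Fin M) ℝ := Matrix.of fun j i => if i ≤ j then (1:ℝ) else 0 with hL_def
  have hLdet : L.det = 1 := by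
    rw [Matrix.det_of_lowerTriangular L (fun i j hij => ?_)]
    · simp [hL_def]
    · simp only [hL_def, Matrix.of_apply, ite_eq_right_iff]
      intro hji
      exact absurd (lt_of_le_of_lt hji hij) (lt_irrefl _)
  -- matrices along the path
  set A : ℝ → Matrix (Fin M) (Fin M) ℝ :=
    fun t => Matrix.of fun j i => 1 / (1 + Real.exp (-(t * (x j - x i + δ)))) with hA_def
  have hT : Tendsto (fun t => (A t).det) atTop (nhds L.det) := by
    apply (Continuous.matrix_det continuous_id).continuousAt.tendsto.comp
    refine tendsto_pi_nhds.mpr ?_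
    intro j
    rw [tendsto_pi_nhds]
    intro i
    by_cases hij : i ≤ j
    · -- d > 0, limit 1
      have hd : 0 < x j - x i + δ := by
        rcases eq_or_lt_of_le hij with h | h
        · subst h; linarith
        · have := (hx h).le; linarith
      have h1 : Tendsto (fun t : ℝ => Real.exp (-(t * (x j - x i + δ)))) atTop (nhds 0) := by
        apply Real.tendsto_exp_atBot.comp
        apply tendsto_neg_atTop_atBot.comp
        exact Tendsto.atTop_mul_const hd tendsto_id
      have h2 : Tendsto (fun t : ℝ => 1 / (1 + Real.exp (-(t * (x j - x i + δ))))) atTop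
          (nhds (1 / (1 + 0))) :=
        tendsto_const_nhds.div (tendsto_const_nhds.add h1) (by norm_num)
      simp only [Matrix.of_apply, if_pos hij]
      simpa using h2
    · -- d < 0, limit 0
      have hji : j < i := lt_of_not_ge hij
      have hd : x j - x i + δ < 0 := by have := hδ i j hji; linarith
      have h1 : Tendsto (fun t : ℝ => 1 + Real.exp (-(t * (x j - x i + δ)))) atTop atTop := by
        apply tendsto_atTop_add_const_left
        apply Real.tendsto_exp_atTop.comp
        apply tendsto_neg_atBot_atTop.comp
        exact Tendsto.atTop_mul_const_of_neg hd tendsto_id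
      have h2 : Tendsto (fun t : ℝ => 1 / (1 + Real.exp (-(t * (x j - x i + δ))))) atTop
          (nhds 0) := by
        simp only [one_div]
        exact tendsto_inv_atTop_zero.comp h1
      simp only [Matrix.of_apply, if_neg hij]
      exact h2
  rw [hLdet] at hT
  have hev : ∀ᶠ t : ℝ in atTop, (A t).det ≠ 0 := hT.eventually_ne one_ne_zero
  obtain ⟨t, ht⟩ := hev.exists
  refine ⟨(fun _ => t, fun i => if h : (i : ℕ) < M then -(t * (x ⟨i, h⟩ - δ)) else 0), ?_⟩
  have : (Matrix.of fun (j i : Fin M) =>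
      1 / (1 + Real.exp (-((fun _ => t) (Fin.castLE hMN i) * x j +
        (fun i : Fin N => if h : (i : ℕ) < M then -(t * (x ⟨i, h⟩ - δ)) else 0)
          (Fin.castLE hMN i))))) = A t := by
    ext j i
    have hi : ((Fin.castLE hMN i : Fin N) : ℕ) < M := by
      simpa using i.isLt
    simp only [Matrix.of_apply, hA_def, dif_pos hi]
    have hxi : x ⟨((Fin.castLE hMN i : Fin N) : ℕ), hi⟩ = x i := by congr 1
    rw [hxi]
    have harg : t * x j + -(t * (x i - δ)) = t * (x j - x i + δ) := by ring
    rw [harg]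
  rw [this]
  exact ht

end AuxLemmas

/-- Let σ be the logistic sigmoid, M ≤ N, and x₁ < ⋯ < x_M distinct reals.
The set of parameter vectors (a, b) ∈ ℝ^N × ℝ^N for which the M × N collocation matrix
S_{ji} = σ(aᵢ xⱼ + bᵢ) has rank < M has Lebesgue measure zero in ℝ^{2N}; consequently,
for almost every random choice of internal parameters the overparametrized interpolation
system S·w = y admits a solution w ∈ ℝ^N for every y ∈ ℝ^M. -/
theorem stmt_19 (M N : ℕ) (hMN : M ≤ N) (x : Fin M → ℝ) (hx : StrictMono x) :
    volume {p : (Fin N → ℝ) × (Fin N → ℝ) |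
      (Matrix.of fun (j : Fin M) (i : Fin N) =>
        1 / (1 + Real.exp (-(p.1 i * x j + p.2 i)))).rank < M} = 0 ∧
    ∀ᵐ p ∂(volume : Measure ((Fin N → ℝ) × (Fin N → ℝ))),
      ∀ y : Fin M → ℝ, ∃ w : Fin N → ℝ,
        (Matrix.of fun (j : Fin M) (i : Fin N) =>
          1 / (1 + Real.exp (-(p.1 i * x j + p.2 i)))) *ᵥ w = y := by
  classical
  set F : (Fin N → ℝ) × (Fin N → ℝ) → ℝ := fun p =>
    (Matrix.of fun (j i : Fin M) =>
      1 / (1 + Real.exp (-(p.1 (Fin.castLE hMN i) * x j + p.2 (Fin.castLE hMN i))))).det with hF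
  have hnull : volume {p | F p = 0} = 0 :=
    null_of_analytic_prod F (det_analytic hMN x) (det_ne_zero_exists hMN x hx)
  have key : ∀ p : (Fin N → ℝ) × (Fin N → ℝ), F p ≠ 0 →
      ∀ y : Fin M → ℝ, ∃ w : Fin N → ℝ,
        (Matrix.of fun (j : Fin M) (i : Fin N) =>
          1 / (1 + Real.exp (-(p.1 i * x j + p.2 i)))) *ᵥ w = y := by
    intro p hp y
    set T : Matrix (Fin M) (Fin M) ℝ := Matrix.of fun j i =>
      1 / (1 + Real.exp (-(p.1 (Fin.castLE hMN i) * x j + p.2 (Fin.castLE hMN i)))) with hT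
    have hdet : IsUnit T.det := isUnit_iff_ne_zero.mpr hp
    set v : Fin M → ℝ := T⁻¹ *ᵥ y with hv
    have hTv : T *ᵥ v = y := by
      rw [hv, Matrix.mulVec_mulVec, Matrix.mul_nonsing_inv _ hdet, Matrix.one_mulVec]
    set w : Fin N → ℝ := fun i => if h : (i : ℕ) < M then v ⟨i, h⟩ else 0 with hw_def
    refine ⟨w, funext fun j => ?_⟩
    have hwk : ∀ k : Fin M, w (Fin.castLE hMN k) = v k := by
      intro k
      have hk : ((Fin.castLE hMN k : Fin N) : ℕ) < M := by simp
      rw [hw_def]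
      simp only [dif_pos hk]
      congr 1
    show ∑ i : Fin N, (Matrix.of fun (j : Fin M) (i : Fin N) =>
        1 / (1 + Real.exp (-(p.1 i * x j + p.2 i)))) j i * w i = y j
    have hsum : ∑ i : Fin N, (Matrix.of fun (j : Fin M) (i : Fin N) =>
        1 / (1 + Real.exp (-(p.1 i * x j + p.2 i)))) j i * w i
        = ∑ k : Fin M, T j k * v k := by
      rw [← Finset.sum_subset (Finset.subset_univ
        (Finset.univ.map (Fin.castLEEmb hMN))) ?_]
      · rw [Finset.sum_map]
        refine Finset.sum_congr rfl fun k _ => ?_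
        have hek : (Fin.castLEEmb hMN) k = Fin.castLE hMN k := rfl
        rw [hek, hwk k]
        rfl
      · intro i _ hi
        have : ¬ ((i : ℕ) < M) := by
          intro hlt
          exact hi (Finset.mem_map.mpr ⟨⟨i, hlt⟩, Finset.mem_univ _, by
            simp [Fin.castLEEmb]⟩)
        have hwi : w i = 0 := by rw [hw_def]; exact dif_neg this
        rw [hwi, mul_zero]
    rw [hsum]
    have : ∑ k : Fin M, T j k * v k = (T *ᵥ v) j := by
      simp [Matrix.mulVec, dotProduct]
    rw [this, hTv]
  have hsub : {p : (Fin N → ℝ) × (Fin N → ℝ) |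
      (Matrix.of fun (j : Fin M) (i : Fin N) =>
        1 / (1 + Real.exp (-(p.1 i * x j + p.2 i)))).rank < M} ⊆ {p | F p = 0} := by
    intro p hpr
    by_contra hne
    have hsurj : Function.Surjective (Matrix.of fun (j : Fin M) (i : Fin N) =>
        1 / (1 + Real.exp (-(p.1 i * x j + p.2 i)))).mulVecLin := by
      intro y
      obtain ⟨w, hw⟩ := key p hne y
      exact ⟨w, by simpa [Matrix.mulVecLin_apply] using hw⟩
    have hrank : (Matrix.of fun (j : Fin M) (i : Fin N) =>
        1 / (1 + Real.exp (-(p.1 i * x j + p.2 i)))).rank = M := by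
      rw [Matrix.rank, LinearMap.range_eq_top.mpr hsurj, finrank_top]
      simp
    simp only [Set.mem_setOf_eq, hrank] at hpr
    exact lt_irrefl M hpr
  refine ⟨measure_mono_null hsub hnull, ?_⟩
  filter_upwards [measure_eq_zero_iff_ae_notMem.mp hnull] with p hp
  exact key p hp
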